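/- Let S = {x ∈ ℝⁿ : g(x) = 0} with g : ℝⁿ → ℝᵐ of class C¹ and g'(x) of full rank m on S. Let f be differentiable with L₁-Lipschitz gradient. Suppose x, x₁ ∈ S satisfy f'(x) + (1/γ)(x₁ − x) ∈ −N(S, x₁), where N(S,x₁) is the orthogonal complement of the tangent space T_{x₁} = ker g'(x₁). Then ‖P_{T_{x₁}} f'(x₁)‖ ≤ (1/γ + L₁)‖x₁ − x‖. -/

import Mathlib

open Metric

/-- If `f'(x) + (1/γ)(x₁ − x) ∈ −N(S,x₁)` with `N(S,x₁) = (ker g'(x₁))ᗮ`, then the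
tangential component of the gradient at `x₁` satisfies
`‖P_{T_{x₁}} f'(x₁)‖ ≤ (1/γ + L₁)‖x₁ − x‖`. -/
theorem stmt_7 {n m : ℕ} (g : EuclideanSpace ℝ (Fin n) → EuclideanSpace ℝ (Fin m))
    (f : EuclideanSpace ℝ (Fin n) → ℝ) (L₁ γ : ℝ) (hγ : 0 < γ)
    (hg : ContDiff ℝ 1 g) (hf : Differentiable ℝ f)
    (hlip : ∀ a b : EuclideanSpace ℝ (Fin n),
      ‖gradient f a - gradient f b‖ ≤ L₁ * ‖a - b‖)
    (S : Set (EuclideanSpace ℝ (Fin n))) (hSdef : S = {y | g y = 0})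
    (x x₁ : EuclideanSpace ℝ (Fin n)) (hx : x ∈ S) (hx₁ : x₁ ∈ S)
    (hrank : LinearMap.range (fderiv ℝ g x₁ : EuclideanSpace ℝ (Fin n) →ₗ[ℝ] EuclideanSpace ℝ (Fin m)) = ⊤)
    (T : Submodule ℝ (EuclideanSpace ℝ (Fin n)))
    (hT : T = LinearMap.ker (fderiv ℝ g x₁ : EuclideanSpace ℝ (Fin n) →ₗ[ℝ] EuclideanSpace ℝ (Fin m)))
    (hopt : -(gradient f x + (1 / γ) • (x₁ - x)) ∈ Tᗮ) :
    ‖(T.orthogonalProjectionOnto (gradient f x₁) :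
        EuclideanSpace ℝ (Fin n))‖ ≤ (1 / γ + L₁) * ‖x₁ - x‖ := by
  set v := gradient f x + (1 / γ) • (x₁ - x) with hv
  have hvT : v ∈ Tᗮ := by simpa using Tᗮ.neg_mem hopt
  have h0 : T.orthogonalProjectionOnto v = 0 :=
    Submodule.orthogonalProjectionOnto_apply_of_mem_orthogonal hvT
  have key : (T.orthogonalProjectionOnto (gradient f x₁) : EuclideanSpace ℝ (Fin n))
      = (T.orthogonalProjectionOnto (gradient f x₁ - v) : EuclideanSpace ℝ (Fin n)) := by
    rw [map_sub, h0]; simp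
  have hb : ‖(T.orthogonalProjectionOnto (gradient f x₁) : EuclideanSpace ℝ (Fin n))‖
      ≤ ‖gradient f x₁ - v‖ := by
    rw [key]; simpa using ContinuousLinearMap.le_of_opNorm_le _ T.orthogonalProjectionOnto_norm_le (gradient f x₁ - v)
  have hdecomp : gradient f x₁ - v
      = (gradient f x₁ - gradient f x) - (1 / γ) • (x₁ - x) := by
    rw [hv]; abel
  calc ‖(T.orthogonalProjectionOnto (gradient f x₁) : EuclideanSpace ℝ (Fin n))‖
      ≤ ‖gradient f x₁ - v‖ := hb
    _ ≤ ‖gradient f x₁ - gradient f x‖ + ‖(1 / γ) • (x₁ - x)‖ := by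
        rw [hdecomp]; exact norm_sub_le _ _
    _ ≤ L₁ * ‖x₁ - x‖ + (1 / γ) * ‖x₁ - x‖ := by
        have h1 := hlip x₁ x
        have h2 : ‖(1 / γ) • (x₁ - x)‖ = (1 / γ) * ‖x₁ - x‖ := by
          rw [norm_smul, Real.norm_eq_abs, abs_of_pos (by positivity : (0:ℝ) < 1 / γ)]
        linarith
    _ = (1 / γ + L₁) * ‖x₁ - x‖ := by ring
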